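/- If f : ℝ → ℝ satisfies f(x - f(x) + f(y)) = f(y) for all x, y ∈ ℝ, the range of f equals [0,1), and the range of x ↦ x - f(x) contains an integer, then f(x) = x - ⌊x⌋ (the fractional part) for all x ∈ ℝ. -/

import Mathlib

theorem fract_characterization (f : ℝ → ℝ)
    (h1 : ∀ x y : ℝ, f (x - f x + f y) = f y)
    (h2 : Set.range f = Set.Ico (0:ℝ) 1)
    (h3 : ∃ x : ℝ, ∃ n : ℤ, x - f x = n) :
    ∀ x : ℝ, f x = x - ⌊x⌋ := by
  have hmem : ∀ x, f x ∈ Set.Ico (0:ℝ) 1 := fun x => h2 ▸ Set.mem_range_self x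
  have hsurj : ∀ t, t ∈ Set.Ico (0:ℝ) 1 → ∃ y, f y = t := by
    intro t ht; rw [← h2] at ht; exact ht
  set S : Set ℝ := Set.range (fun x => x - f x) with hS
  have hB : ∀ s ∈ S, ∀ t ∈ Set.Ico (0:ℝ) 1, f (s + t) = t := by
    intro s hs t ht
    obtain ⟨x, hx⟩ := hs
    obtain ⟨y, hy⟩ := hsurj t ht
    have h := h1 x y
    simp only at hx
    rw [hx, hy] at h
    exact h
  have hC : ∀ s ∈ S, ∀ s' ∈ S, s ≤ s' → s' < s + 1 → s = s' := by
    intro s hs s' hs' hle hlt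
    have h0 : f (s' + 0) = 0 := hB s' hs' 0 ⟨le_refl _, one_pos⟩
    have h1' : f (s + (s' - s)) = s' - s :=
      hB s hs (s' - s) ⟨by linarith, by linarith⟩
    rw [show s + (s' - s) = s' + 0 by ring, h0] at h1'
    linarith
  have hD : ∀ x : ℝ, (x - f x) ∈ S ∧ x - f x ≤ x ∧ x < x - f x + 1 := by
    intro x
    have h := hmem x
    exact ⟨⟨x, rfl⟩, by linarith [h.1], by linarith [h.2]⟩
  have hE : ∀ s ∈ S, s + 1 ∈ S := by
    intro s hs
    obtain ⟨hs', hle, hlt⟩ := hD (s + 1)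
    rcases lt_or_eq_of_le hle with h | h
    · exfalso
      have := hC s hs _ hs' (by linarith) (by linarith)
      linarith
    · rw [← h]; exact hs'
  have hF : ∀ s ∈ S, s - 1 ∈ S := by
    intro s hs
    obtain ⟨hs1, hle1, hlt1⟩ := hD (s - 1/2)
    set s1 := s - 1/2 - f (s - 1/2) with hs1def
    clear_value s1
    have hne1 : s1 ≤ s - 1 := by
      by_contra hcon
      push_neg at hcon
      have := hC s1 hs1 s hs (by linarith) (by linarith)
      linarith
    rcases lt_or_eq_of_le hne1 with h | h
    · exfalso
      set ε := (s - 1 - s1) / 2 with hε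
      have hεpos : 0 < ε := by simp [hε]; linarith
      obtain ⟨hs2, hle2, hlt2⟩ := hD (s - ε)
      set s2 := s - ε - f (s - ε) with hs2def
      clear_value s2
      have hεlt : ε < 1/2 := by
        simp only [hε]; linarith
      have hne2 : s2 ≤ s - 1 := by
        by_contra hcon
        push_neg at hcon
        have := hC s2 hs2 s hs (by linarith) (by linarith)
        linarith
      have h12 : s1 = s2 := hC s1 hs1 s2 hs2 (by linarith) (by linarith)
      linarith
    · rw [h] at hs1; exact hs1
  have hG : ∀ m : ℤ, ((m : ℝ)) ∈ S := by
    obtain ⟨x0, n0, hx0⟩ := h3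
    have hn0 : ((n0 : ℝ)) ∈ S := ⟨x0, hx0⟩
    have key : ∀ k : ℤ, ((n0 + k : ℤ) : ℝ) ∈ S := by
      intro k
      induction k using Int.induction_on with
      | zero => simpa using hn0
      | succ i ih =>
        have := hE _ ih
        have heq : ((n0 + (i + 1) : ℤ) : ℝ) = ((n0 + i : ℤ) : ℝ) + 1 := by push_cast; ring
        rw [heq]; exact this
      | pred i ih =>
        have := hF _ ih
        have heq : ((n0 + (-i - 1) : ℤ) : ℝ) = ((n0 + (-i) : ℤ) : ℝ) - 1 := by push_cast; ring
        rw [heq]; exact this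
    intro m
    have := key (m - n0)
    have heq : ((n0 + (m - n0) : ℤ) : ℝ) = (m : ℝ) := by push_cast; ring
    rwa [heq] at this
  intro x
  obtain ⟨hsx, hle, hlt⟩ := hD x
  have hfl : ((⌊x⌋ : ℝ)) ∈ S := hG ⌊x⌋
  have h1' : (⌊x⌋ : ℝ) ≤ x := Int.floor_le x
  have h2' : x < ⌊x⌋ + 1 := Int.lt_floor_add_one x
  rcases le_total (x - f x) ((⌊x⌋ : ℝ)) with h | h
  · have := hC _ hsx _ hfl h (by linarith)
    linarith
  · have := hC _ hfl _ hsx h (by linarith)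
    linarith
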